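/- Fix an integer d ≥ 2, ν ∈ [0,∞), T ∈ (0,+∞], and a finite set G ⊂ ℤ^d∖{0} with G = −G. Let γ = (γ_k)_{k∈G} be a C¹ solution on [0,T) of the Galerkin component system with zero forcing, dγ_k/dt = −ν|k|²γ_k − i(2π)^{−d/2} ∑_{h∈G} (γ_h·(k−h))·P_k γ_{k−h} (k ∈ G, γ_j := 0 for j ∉ G), such that for every t ∈ [0,T) and k ∈ G one has conj(γ_k(t)) = γ_{−k}(t) and k·γ_k(t) = 0. Then: (a) if ν = 0, ∑_{k∈G} |γ_k(t)|² = ∑_{k∈G} |γ_k(0)|² for all t ∈ [0,T); (b) if ν > 0, √(∑_{k∈G} |γ_k(t)|²) ≤ √(∑_{k∈G} |γ_k(0)|²) · e^{−νt} for all t ∈ [0,T). -/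

import Mathlib

open Filter Set Finset

/-- `k·c := ∑_r k_r c_r` (no complex conjugation). -/
noncomputable def zcDot {d : ℕ} (k : Fin d → ℤ) (c : Fin d → ℂ) : ℂ := ∑ r, (k r : ℂ) * c r

/-- `|k|²`, the squared Euclidean norm of `k ∈ ℤ^d`. -/
def zNormSq {d : ℕ} (k : Fin d → ℤ) : ℤ := ∑ r, (k r) ^ 2

/-- `P_k c := c − (k·c)·k/|k|²`, the projection of `ℂ^d` onto the orthogonal
complement of `k`. -/
noncomputable def projPerp {d : ℕ} (k : Fin d → ℤ) (c : Fin d → ℂ) : Fin d → ℂ :=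
  fun r => c r - zcDot k c * (k r : ℂ) / (zNormSq k : ℂ)

/-- The right-hand side of the Galerkin component system:
`−ν|k|²γ_k − i(2π)^{−d/2} ∑_{h∈G} (γ_h·(k−h))·P_k γ_{k−h} + f_k`. -/
noncomputable def galRHS (d : ℕ) (ν : ℝ) (G : Finset (Fin d → ℤ))
    (f : (Fin d → ℤ) → ℝ → Fin d → ℂ) (γ : (Fin d → ℤ) → ℝ → Fin d → ℂ)
    (k : Fin d → ℤ) (t : ℝ) : Fin d → ℂ :=
  fun r =>
    -((ν : ℂ) * (zNormSq k : ℂ)) * γ k t r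
      - Complex.I * (((2 * Real.pi) ^ (-(d : ℝ) / 2) : ℝ) : ℂ) *
        ∑ h ∈ G, zcDot (k - h) (γ h t) * projPerp k (γ (k - h) t) r
      + f k t r

lemma zcDot_add_left {d : ℕ} (a b : Fin d → ℤ) (c : Fin d → ℂ) :
    zcDot (a + b) c = zcDot a c + zcDot b c := by
  simp only [zcDot, Pi.add_apply, Int.cast_add, add_mul, Finset.sum_add_distrib]

lemma zcDot_neg_left {d : ℕ} (a : Fin d → ℤ) (c : Fin d → ℂ) :
    zcDot (-a) c = -zcDot a c := by
  simp [zcDot, Finset.sum_neg_distrib]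

/-- derivative of `normSq ∘ f`. -/
lemma hasDerivWithinAt_normSq_comp {f : ℝ → ℂ} {f' : ℂ} {s : Set ℝ} {x : ℝ}
    (hf : HasDerivWithinAt f f' s x) :
    HasDerivWithinAt (fun τ => Complex.normSq (f τ))
      (2 * (f' * (starRingEnd ℂ) (f x)).re) s x := by
  have hre : HasDerivWithinAt (fun τ => (f τ).re) f'.re s x :=
    Complex.reCLM.hasFDerivAt.comp_hasDerivWithinAt x hf
  have him : HasDerivWithinAt (fun τ => (f τ).im) f'.im s x :=
    Complex.imCLM.hasFDerivAt.comp_hasDerivWithinAt x hf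
  have h := (hre.pow 2).add (him.pow 2)
  have hfun : (fun τ => Complex.normSq (f τ)) = fun τ => (f τ).re ^ 2 + (f τ).im ^ 2 := by
    funext τ; simp [Complex.normSq_apply]; ring
  rw [hfun]
  refine h.congr_deriv ?_
  simp [Complex.mul_re]
  ring

/-- The key algebraic identity: the nonlinear term does not contribute to the
energy balance. -/
lemma energy_identity (d : ℕ) (ν : ℝ) (G : Finset (Fin d → ℤ))
    (hGsym : ∀ k ∈ G, -k ∈ G)
    (γ : (Fin d → ℤ) → ℝ → Fin d → ℂ) (s : ℝ)
    (hg0 : ∀ j, j ∉ G → γ j s = 0)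
    (hconj : ∀ k ∈ G, ∀ r, (starRingEnd ℂ) (γ k s r) = γ (-k) s r)
    (hdiv : ∀ k ∈ G, zcDot k (γ k s) = 0) :
    ∑ k ∈ G, ∑ r, 2 * ((galRHS d ν G (fun _ _ _ => 0) γ k s r) * (starRingEnd ℂ) (γ k s r)).re
      = -(2 * ν) * ∑ k ∈ G, (zNormSq k : ℝ) * ∑ r, Complex.normSq (γ k s r) := by
  classical
  set c : ℂ := (((2 * Real.pi) ^ (-(d : ℝ) / 2) : ℝ) : ℂ) with hc
  -- pairing with conj γ kills the projection correction
  have hpair : ∀ k ∈ G, ∀ v : Fin d → ℂ,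
      (∑ r, projPerp k v r * (starRingEnd ℂ) (γ k s r))
        = ∑ r, v r * (starRingEnd ℂ) (γ k s r) := by
    intro k hk v
    have h0 : ∑ r, (k r : ℂ) * (starRingEnd ℂ) (γ k s r) = 0 := by
      have := congrArg (starRingEnd ℂ) (hdiv k hk)
      simpa [zcDot, map_sum] using this
    simp only [projPerp, sub_mul, Finset.sum_sub_distrib]
    have : ∑ r, zcDot k v * (k r : ℂ) / (zNormSq k : ℂ) * (starRingEnd ℂ) (γ k s r)
        = zcDot k v / (zNormSq k : ℂ) * ∑ r, (k r : ℂ) * (starRingEnd ℂ) (γ k s r) := by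
      rw [Finset.mul_sum]
      exact Finset.sum_congr rfl fun r _ => by ring
    rw [this, h0, mul_zero, sub_zero]
  -- per-k complexification
  have hk1 : ∀ k ∈ G,
      (∑ r, galRHS d ν G (fun _ _ _ => 0) γ k s r * (starRingEnd ℂ) (γ k s r))
        = -((ν : ℂ) * (zNormSq k : ℂ)) * ((∑ r, Complex.normSq (γ k s r) : ℝ) : ℂ)
          - Complex.I * c * ∑ h ∈ G, zcDot (k - h) (γ h s)
              * ∑ r, γ (k - h) s r * γ (-k) s r := by
    intro k hk
    have step1 : ∀ r : Fin d, galRHS d ν G (fun _ _ _ => 0) γ k s r * (starRingEnd ℂ) (γ k s r)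
        = -((ν : ℂ) * (zNormSq k : ℂ)) * (γ k s r * (starRingEnd ℂ) (γ k s r))
          - ∑ h ∈ G, Complex.I * c * (zcDot (k - h) (γ h s)
              * (projPerp k (γ (k - h) s) r * (starRingEnd ℂ) (γ k s r))) := by
      intro r
      simp only [galRHS, add_zero, sub_mul, Finset.mul_sum, Finset.sum_mul]
      congr 1
      · ring
      · exact Finset.sum_congr rfl fun h _ => by ring
    rw [Finset.sum_congr rfl fun r _ => step1 r, Finset.sum_sub_distrib]
    congr 1
    · rw [← Finset.mul_sum]
      congr 1
      push_cast
      exact Finset.sum_congr rfl fun r _ => (Complex.mul_conj _)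
    · rw [Finset.sum_comm]
      rw [Finset.mul_sum]
      refine Finset.sum_congr rfl fun h hh => ?_
      rw [← Finset.mul_sum, ← Finset.mul_sum]
      congr 2
      rw [hpair k hk]
      exact Finset.sum_congr rfl fun r _ => by rw [hconj k hk r]
  -- the triple sum vanishes
  have hS : ∑ k ∈ G, ∑ h ∈ G, zcDot (k - h) (γ h s) * ∑ r, γ (k - h) s r * γ (-k) s r
      = 0 := by
    set f : (Fin d → ℤ) × (Fin d → ℤ) → ℂ := fun p =>
      zcDot (p.1 - p.2) (γ p.2 s) * ∑ r, γ (p.1 - p.2) s r * γ (-p.1) s r with hf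
    have hrw : ∑ k ∈ G, ∑ h ∈ G, zcDot (k - h) (γ h s) * ∑ r, γ (k - h) s r * γ (-k) s r
        = ∑ p ∈ G ×ˢ G, f p := (Finset.sum_product G G f).symm
    rw [hrw]
    set P : Finset ((Fin d → ℤ) × (Fin d → ℤ)) :=
      (G ×ˢ G).filter (fun p => p.1 - p.2 ∈ G) with hP
    have hfilter : ∑ p ∈ P, f p = ∑ p ∈ G ×ˢ G, f p := by
      refine Finset.sum_filter_of_ne fun p hp hne => ?_
      by_contra hmem
      apply hne
      simp only [hf, hg0 _ hmem, Pi.zero_apply, zero_mul, Finset.sum_const_zero, mul_zero]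
    rw [← hfilter]
    set σ : (Fin d → ℤ) × (Fin d → ℤ) → (Fin d → ℤ) × (Fin d → ℤ) :=
      fun p => (p.2 - p.1, p.2) with hσ
    have hσσ : ∀ p, σ (σ p) = p := by
      intro p; simp only [hσ]; ext <;> simp
    have hmapsto : ∀ p ∈ P, σ p ∈ P := by
      intro p hp
      simp only [hP, Finset.mem_filter, Finset.mem_product] at hp ⊢
      obtain ⟨⟨h1, h2⟩, h3⟩ := hp
      refine ⟨⟨?_, h2⟩, ?_⟩
      · have := hGsym _ h3
        simpa [neg_sub] using this
      · have := hGsym _ h1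
        simpa [hσ, sub_sub_cancel_left] using this
    have hsum_eq : ∑ p ∈ P, f p = ∑ p ∈ P, f (σ p) :=
      Finset.sum_nbij' σ σ hmapsto hmapsto (fun p _ => hσσ p) (fun p _ => hσσ p)
        (fun p _ => by rw [hσσ p])
    have hcancel : ∀ p ∈ P, f p + f (σ p) = 0 := by
      intro p hp
      simp only [hP, Finset.mem_filter, Finset.mem_product] at hp
      obtain ⟨⟨h1, h2⟩, h3⟩ := hp
      have e1 : (σ p).1 - (σ p).2 = -p.1 := by
        simp only [hσ]; ring
      have e2 : -(σ p).1 = p.1 - p.2 := by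
        simp only [hσ]; ring
      have hsum : ∑ r, γ (-p.1) s r * γ (p.1 - p.2) s r
          = ∑ r, γ (p.1 - p.2) s r * γ (-p.1) s r :=
        Finset.sum_congr rfl fun r _ => mul_comm _ _
      simp only [hf, e1, e2, hsum]
      rw [← add_mul]
      have : zcDot (p.1 - p.2) (γ p.2 s) + zcDot (-p.1) (γ p.2 s)
          = -zcDot p.2 (γ p.2 s) := by
        rw [← zcDot_add_left, ← zcDot_neg_left]
        congr 1
        ring
      rw [this, hdiv _ h2, neg_zero, zero_mul]
    have h2S : (∑ p ∈ P, f p) + (∑ p ∈ P, f p) = 0 := by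
      nth_rewrite 2 [hsum_eq]
      rw [← Finset.sum_add_distrib]
      exact Finset.sum_eq_zero hcancel
    have := add_self_eq_zero.mp h2S
    exact this
  -- put things together
  have hre : ∑ k ∈ G, ∑ r, 2 * ((galRHS d ν G (fun _ _ _ => 0) γ k s r)
        * (starRingEnd ℂ) (γ k s r)).re
      = 2 * (∑ k ∈ G, ∑ r, (galRHS d ν G (fun _ _ _ => 0) γ k s r)
        * (starRingEnd ℂ) (γ k s r)).re := by
    rw [Complex.re_sum, Finset.mul_sum]
    exact Finset.sum_congr rfl fun k _ => by rw [Complex.re_sum, Finset.mul_sum]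
  rw [hre]
  have : ∑ k ∈ G, ∑ r, (galRHS d ν G (fun _ _ _ => 0) γ k s r) * (starRingEnd ℂ) (γ k s r)
      = ∑ k ∈ G, -((ν : ℂ) * (zNormSq k : ℂ)) * ((∑ r, Complex.normSq (γ k s r) : ℝ) : ℂ)
        - Complex.I * c * (∑ k ∈ G, ∑ h ∈ G, zcDot (k - h) (γ h s)
            * ∑ r, γ (k - h) s r * γ (-k) s r) := by
    rw [Finset.mul_sum, ← Finset.sum_sub_distrib]
    exact Finset.sum_congr rfl fun k hk => by rw [hk1 k hk, Finset.mul_sum]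
  rw [this, hS, mul_zero, sub_zero]
  rw [Complex.re_sum, Finset.mul_sum, Finset.mul_sum]
  refine Finset.sum_congr rfl fun k _ => ?_
  have : -((ν : ℂ) * (zNormSq k : ℂ)) * ((∑ r, Complex.normSq (γ k s r) : ℝ) : ℂ)
      = (((-(ν * (zNormSq k : ℝ)) * ∑ r, Complex.normSq (γ k s r)) : ℝ) : ℂ) := by
    push_cast; ring
  rw [this, Complex.ofReal_re]
  ring

/-- Lemma 6.4(ii) of the paper: with zero forcing, energy conservation in the Euler
case (`ν = 0`) and exponential L² decay in the Navier–Stokes case (`ν > 0`). -/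
theorem stmt14 (d : ℕ) (hd : 2 ≤ d) (ν : ℝ) (hν : 0 ≤ ν) (T : EReal) (hT : 0 < T)
    (G : Finset (Fin d → ℤ)) (hG0 : (0 : Fin d → ℤ) ∉ G) (hGsym : ∀ k ∈ G, -k ∈ G)
    (γ : (Fin d → ℤ) → ℝ → Fin d → ℂ)
    (hγ0 : ∀ j, j ∉ G → ∀ t : ℝ, γ j t = 0)
    (hODE : ∀ k ∈ G, ∀ t : ℝ, 0 ≤ t → (t : EReal) < T →
      HasDerivWithinAt (γ k) (galRHS d ν G (fun _ _ _ => 0) γ k t)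
        {τ : ℝ | 0 ≤ τ ∧ (τ : EReal) < T} t)
    (hconj : ∀ k ∈ G, ∀ t : ℝ, 0 ≤ t → (t : EReal) < T →
      ∀ r, (starRingEnd ℂ) (γ k t r) = γ (-k) t r)
    (hdiv : ∀ k ∈ G, ∀ t : ℝ, 0 ≤ t → (t : EReal) < T → zcDot k (γ k t) = 0) :
    (ν = 0 → ∀ t : ℝ, 0 ≤ t → (t : EReal) < T →
      ∑ k ∈ G, ∑ r, Complex.normSq (γ k t r) = ∑ k ∈ G, ∑ r, Complex.normSq (γ k 0 r)) ∧
    (0 < ν → ∀ t : ℝ, 0 ≤ t → (t : EReal) < T →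
      Real.sqrt (∑ k ∈ G, ∑ r, Complex.normSq (γ k t r)) ≤
        Real.sqrt (∑ k ∈ G, ∑ r, Complex.normSq (γ k 0 r)) * Real.exp (-ν * t)) := by
  classical
  set S0 : Set ℝ := {τ : ℝ | 0 ≤ τ ∧ (τ : EReal) < T} with hS0
  set E : ℝ → ℝ := fun s => ∑ k ∈ G, ∑ r, Complex.normSq (γ k s r) with hE
  set D : ℝ → ℝ := fun s => -(2 * ν) * ∑ k ∈ G, (zNormSq k : ℝ) * ∑ r, Complex.normSq (γ k s r)
    with hD
  -- derivative of the energy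
  have hEderiv : ∀ s ∈ S0, HasDerivWithinAt E (D s) S0 s := by
    intro s hs
    have h1 : HasDerivWithinAt E
        (∑ k ∈ G, ∑ r, 2 * ((galRHS d ν G (fun _ _ _ => 0) γ k s r)
          * (starRingEnd ℂ) (γ k s r)).re) S0 s := by
      refine HasDerivWithinAt.fun_sum fun k hk => HasDerivWithinAt.fun_sum fun r _ => ?_
      exact hasDerivWithinAt_normSq_comp
        ((hasDerivWithinAt_pi.1 (hODE k hk s hs.1 hs.2)) r)
    rwa [energy_identity d ν G hGsym γ s (fun j hj => hγ0 j hj s)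
      (fun k hk => hconj k hk s hs.1 hs.2) (fun k hk => hdiv k hk s hs.1 hs.2)] at h1
  -- basic positivity facts
  have hEnonneg : ∀ s, 0 ≤ E s := fun s =>
    Finset.sum_nonneg fun k _ => Finset.sum_nonneg fun r _ => Complex.normSq_nonneg _
  have hkge1 : ∀ k ∈ G, (1 : ℝ) ≤ (zNormSq k : ℝ) := by
    intro k hk
    have hkne : k ≠ 0 := fun h => hG0 (h ▸ hk)
    obtain ⟨r, hr⟩ := Function.ne_iff.mp hkne
    have h1 : (1 : ℤ) ≤ (k r) ^ 2 := by
      have := Int.one_le_abs hr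
      calc (1 : ℤ) = 1 ^ 2 := by norm_num
        _ ≤ |k r| ^ 2 := by exact pow_le_pow_left₀ (by norm_num) this 2
        _ = (k r) ^ 2 := sq_abs _
    have h2 : (1 : ℤ) ≤ zNormSq k :=
      le_trans h1 (Finset.single_le_sum (f := fun i => (k i) ^ 2)
        (fun i _ => sq_nonneg _) (Finset.mem_univ r))
    exact_mod_cast h2
  -- set up for a fixed time t
  have hsub : ∀ t : ℝ, 0 ≤ t → (t : EReal) < T → Icc 0 t ⊆ S0 := by
    intro t ht0 htT τ hτ
    exact ⟨hτ.1, lt_of_le_of_lt (EReal.coe_le_coe_iff.mpr hτ.2) htT⟩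
  have hcont : ∀ t : ℝ, 0 ≤ t → (t : EReal) < T → ContinuousOn E (Icc 0 t) := by
    intro t ht0 htT x hx
    exact ((hEderiv x (hsub t ht0 htT hx)).continuousWithinAt).mono (hsub t ht0 htT)
  have hderivAt : ∀ t : ℝ, 0 ≤ t → (t : EReal) < T → ∀ x ∈ Ioo 0 t, HasDerivAt E (D x) x := by
    intro t ht0 htT x hx
    have hmem : S0 ∈ nhds x :=
      mem_of_superset (isOpen_Ioo.mem_nhds hx) (Ioo_subset_Icc_self.trans (hsub t ht0 htT))
    exact (hEderiv x (hsub t ht0 htT (Ioo_subset_Icc_self hx))).hasDerivAt hmem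
  constructor
  · -- Euler case: energy conservation
    intro hν0 t ht0 htT
    subst hν0
    have hD0 : ∀ x, D x = 0 := by intro x; simp [hD]
    have hmono : MonotoneOn E (Icc 0 t) := by
      refine monotoneOn_of_deriv_nonneg (convex_Icc 0 t) (hcont t ht0 htT) ?_ ?_
      · intro x hx
        rw [interior_Icc] at hx
        exact ((hderivAt t ht0 htT x hx).differentiableAt).differentiableWithinAt
      · intro x hx
        rw [interior_Icc] at hx
        rw [(hderivAt t ht0 htT x hx).deriv, hD0]
    have hanti : AntitoneOn E (Icc 0 t) := by
      refine antitoneOn_of_deriv_nonpos (convex_Icc 0 t) (hcont t ht0 htT) ?_ ?_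
      · intro x hx
        rw [interior_Icc] at hx
        exact ((hderivAt t ht0 htT x hx).differentiableAt).differentiableWithinAt
      · intro x hx
        rw [interior_Icc] at hx
        rw [(hderivAt t ht0 htT x hx).deriv, hD0]
    have h0mem : (0 : ℝ) ∈ Icc 0 t := ⟨le_refl _, ht0⟩
    have htmem : t ∈ Icc 0 t := ⟨ht0, le_refl _⟩
    exact le_antisymm (hanti h0mem htmem ht0) (hmono h0mem htmem ht0)
  · -- Navier–Stokes case: exponential decay
    intro hνpos t ht0 htT
    set F : ℝ → ℝ := fun τ => E τ * Real.exp (2 * ν * τ) with hF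
    have hexp : ∀ x : ℝ, HasDerivAt (fun τ => Real.exp (2 * ν * τ))
        (Real.exp (2 * ν * x) * (2 * ν)) x := by
      intro x
      have h2 : HasDerivAt (fun τ : ℝ => 2 * ν * τ) (2 * ν) x := by
        simpa using (hasDerivAt_id x).const_mul (2 * ν)
      exact h2.exp
    have hFanti : AntitoneOn F (Icc 0 t) := by
      refine antitoneOn_of_deriv_nonpos (convex_Icc 0 t) ?_ ?_ ?_
      · exact (hcont t ht0 htT).mul
          ((Real.continuous_exp.comp (continuous_const.mul continuous_id)).continuousOn)
      · intro x hx
        rw [interior_Icc] at hx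
        exact (((hderivAt t ht0 htT x hx).mul (hexp x)).differentiableAt).differentiableWithinAt
      · intro x hx
        rw [interior_Icc] at hx
        have hFd : HasDerivAt F
            (D x * Real.exp (2 * ν * x) + E x * (Real.exp (2 * ν * x) * (2 * ν))) x :=
          (hderivAt t ht0 htT x hx).mul (hexp x)
        rw [hFd.deriv]
        have key : D x + 2 * ν * E x ≤ 0 := by
          have hsplit : D x + 2 * ν * E x
              = ∑ k ∈ G, 2 * ν * (1 - (zNormSq k : ℝ)) * ∑ r, Complex.normSq (γ k x r) := by
            simp only [hD, hE, Finset.mul_sum, ← Finset.sum_add_distrib]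
            exact Finset.sum_congr rfl fun k _ => Finset.sum_congr rfl fun r _ => by ring
          rw [hsplit]
          refine Finset.sum_nonpos fun k hk => ?_
          have hN : (0 : ℝ) ≤ ∑ r, Complex.normSq (γ k x r) :=
            Finset.sum_nonneg fun r _ => Complex.normSq_nonneg _
          have ha := hkge1 k hk
          nlinarith [mul_nonneg (mul_nonneg (mul_nonneg (by norm_num : (0:ℝ) ≤ 2) hνpos.le)
            (sub_nonneg.mpr ha)) hN]
        have h3 : Real.exp (2 * ν * x) * (D x + 2 * ν * E x) ≤ 0 :=
          mul_nonpos_iff.mpr (Or.inl ⟨(Real.exp_pos _).le, key⟩)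
        calc D x * Real.exp (2 * ν * x) + E x * (Real.exp (2 * ν * x) * (2 * ν))
            = Real.exp (2 * ν * x) * (D x + 2 * ν * E x) := by ring
          _ ≤ 0 := h3
    have hFle : F t ≤ F 0 := hFanti ⟨le_refl _, ht0⟩ ⟨ht0, le_refl _⟩ ht0
    have hF0 : F 0 = E 0 := by simp [hF]
    have hEt : E t ≤ E 0 * Real.exp (-(2 * ν * t)) := by
      have hrw : E t = F t * Real.exp (-(2 * ν * t)) := by
        rw [hF]
        rw [mul_assoc, ← Real.exp_add]
        simp
      rw [hrw]
      exact mul_le_mul_of_nonneg_right (hFle.trans_eq hF0) (Real.exp_pos _).le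
    have h4 : Real.exp (-(2 * ν * t)) = (Real.exp (-ν * t)) ^ 2 := by
      rw [sq, ← Real.exp_add]
      congr 1
      ring
    show Real.sqrt (E t) ≤ Real.sqrt (E 0) * Real.exp (-ν * t)
    calc Real.sqrt (E t) ≤ Real.sqrt (E 0 * Real.exp (-(2 * ν * t))) := Real.sqrt_le_sqrt hEt
      _ = Real.sqrt (E 0) * Real.exp (-ν * t) := by
          rw [Real.sqrt_mul (hEnonneg 0), h4, Real.sqrt_sq (Real.exp_pos _).le]
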